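/- The lower bound of the Wilson score interval, L(x̄) = (n·x̄ + χ²/2)/(n+χ²) − (χ/(n+χ²))·√(n·x̄(1−x̄) + χ²/4), is a strictly increasing function of x̄ on [0,1], for any fixed n > 0 and χ > 0. -/

import Mathlib

/-- The lower bound of the Wilson score interval is strictly increasing in the sample proportion. -/
theorem wilson_lower_strictMono (n χ : ℝ) (hn : 0 < n) (hχ : 0 < χ) :
    StrictMonoOn
      (fun x : ℝ => (n * x + χ ^ 2 / 2) / (n + χ ^ 2) -
        χ / (n + χ ^ 2) * Real.sqrt (n * (x * (1 - x)) + χ ^ 2 / 4))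
      (Set.Icc 0 1) := by
  intro a ha b hb hab
  obtain ⟨ha0, ha1⟩ := ha
  obtain ⟨hb0, hb1⟩ := hb
  have hd : (0:ℝ) < n + χ ^ 2 := by positivity
  set qa := n * (a * (1 - a)) + χ ^ 2 / 4 with hqa_def
  set qb := n * (b * (1 - b)) + χ ^ 2 / 4 with hqb_def
  have haa : 0 ≤ a * (1 - a) := mul_nonneg ha0 (by linarith)
  have hbb : 0 ≤ b * (1 - b) := mul_nonneg hb0 (by linarith)
  have hqa0 : 0 ≤ qa := by rw [hqa_def]; nlinarith
  have hqb0 : 0 ≤ qb := by rw [hqb_def]; nlinarith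
  set sa := Real.sqrt qa with hsa_def
  set sb := Real.sqrt qb with hsb_def
  have hsa0 : 0 ≤ sa := Real.sqrt_nonneg _
  have hsb0 : 0 ≤ sb := Real.sqrt_nonneg _
  have hsa2 : sa ^ 2 = qa := Real.sq_sqrt hqa0
  have hsb2 : sb ^ 2 = qb := Real.sq_sqrt hqb0
  have hsa_ge : χ / 2 ≤ sa := by
    rw [hsa_def, show χ / 2 = Real.sqrt ((χ / 2) ^ 2) from (Real.sqrt_sq (by positivity)).symm]
    exact Real.sqrt_le_sqrt (by rw [hqa_def]; nlinarith)
  have hsb_ge : χ / 2 ≤ sb := by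
    rw [hsb_def, show χ / 2 = Real.sqrt ((χ / 2) ^ 2) from (Real.sqrt_sq (by positivity)).symm]
    exact Real.sqrt_le_sqrt (by rw [hqb_def]; nlinarith)
  have hb_pos : 0 < b := lt_of_le_of_lt ha0 hab
  have hsum_pos : 0 < sa + sb := by linarith
  have hlt : χ * (1 - a - b) < sa + sb := by nlinarith
  have hprod : n * (b - a) * (χ * (1 - a - b)) < n * (b - a) * (sa + sb) :=
    mul_lt_mul_of_pos_left hlt (by nlinarith)
  have heq : χ * (sb - sa) * (sa + sb) = n * (b - a) * (χ * (1 - a - b)) := by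
    have : sb ^ 2 - sa ^ 2 = n * (b - a) * (1 - a - b) := by
      rw [hsa2, hsb2, hqa_def, hqb_def]; ring
    linear_combination χ * this
  have key : χ * (sb - sa) < n * (b - a) := by
    have h2 : χ * (sb - sa) * (sa + sb) < n * (b - a) * (sa + sb) := by
      rw [heq]; exact hprod
    exact lt_of_mul_lt_mul_right h2 hsum_pos.le
  simp only
  rw [show (n * a + χ ^ 2 / 2) / (n + χ ^ 2) - χ / (n + χ ^ 2) * sa
      = (n * a + χ ^ 2 / 2 - χ * sa) / (n + χ ^ 2) from by ring,
    show (n * b + χ ^ 2 / 2) / (n + χ ^ 2) - χ / (n + χ ^ 2) * sb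
      = (n * b + χ ^ 2 / 2 - χ * sb) / (n + χ ^ 2) from by ring]
  exact div_lt_div_of_pos_right (by linarith) hd
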